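/- arXiv:2503.06432 — 2 statements merged into one kernel-verified Lean document; each statement's English description precedes it below -/
import Mathlib

section
/- For each n with 1 ≤ n ≤ p, the hyperplane H_n separates the chambers x₁C and e_{n−1}C. -/
noncomputable section

namespace PaperBound

variable {B : Type} {W : Type} [Group W]

/-- The value `B(α_i, α_j)` of the canonical symmetric bilinear form on simple roots:
`-cos (π / m i j)` if `m i j ≠ ∞` (encoded as `M i j ≠ 0`) and `-1` otherwise. -/
def cB (M : CoxeterMatrix B) (i j : B) : ℝ :=
  if M i j = 0 then -1 else - Real.cos (Real.pi / (M i j : ℝ))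

/-- The canonical symmetric bilinear form on `V = B → ℝ` (coordinates in the basis of
simple roots `Δ = {α_i}`). -/
def bform [Fintype B] (M : CoxeterMatrix B) (u v : B → ℝ) : ℝ :=
  ∑ i, ∑ j, u i * v j * cB M i j

/-- The natural pairing `⟨-,-⟩ : V* × V → ℝ`, where both `V` and `V*` are modelled as
`B → ℝ` (coordinates of `V*` taken in the dual basis of `Δ`). -/
def pair [Fintype B] (f v : B → ℝ) : ℝ := ∑ i, f i * v i

/-- The simple root `α_i ∈ V`. -/
def sroot [DecidableEq B] (i : B) : B → ℝ := Pi.single i 1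

/-- `ρ` is the geometric representation of `W` on `V = B → ℝ`:
`s_i · v = v - 2 B(α_i, v) α_i`. -/
def IsGeomRep [Fintype B] [DecidableEq B] (M : CoxeterMatrix B) (cs : CoxeterSystem M W)
    (ρ : W →* (B → ℝ) ≃ₗ[ℝ] (B → ℝ)) : Prop :=
  ∀ (i : B) (v : B → ℝ), ρ (cs.simple i) v = v - (2 * bform M (sroot i) v) • sroot i

/-- `π` is the contragredient representation of `W` on `V* = B → ℝ`:
`⟨w·f, w·v⟩ = ⟨f, v⟩`. -/
def IsContraRep [Fintype B] (ρ : W →* (B → ℝ) ≃ₗ[ℝ] (B → ℝ))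
    (π : W →* (B → ℝ) ≃ₗ[ℝ] (B → ℝ)) : Prop :=
  ∀ (w : W) (f v : B → ℝ), pair (π w f) (ρ w v) = pair f v

/-- The set `Φ⁺` of positive roots: roots (elements of the orbit of the simple roots)
all of whose coordinates in the basis `Δ` are nonnegative. -/
def PhiPos [Fintype B] [DecidableEq B] (ρ : W →* (B → ℝ) ≃ₗ[ℝ] (B → ℝ)) : Set (B → ℝ) :=
  {α | (∃ (w : W) (i : B), α = ρ w (sroot i)) ∧ ∀ j, 0 ≤ α j}

/-- The hyperplane `H_α = {f ∈ V* : ⟨f, α⟩ = 0}`. -/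
def hyp [Fintype B] (α : B → ℝ) : Set (B → ℝ) := {f | pair f α = 0}

/-- The set `𝔓 = {H_α : α ∈ Φ⁺}` of hyperplanes. -/
def Planes [Fintype B] [DecidableEq B] (ρ : W →* (B → ℝ) ≃ₗ[ℝ] (B → ℝ)) :
    Set (Set (B → ℝ)) :=
  {H | ∃ α ∈ PhiPos (W := W) ρ, H = hyp α}

/-- The (open) dominant chamber `C = {f ∈ V* : ⟨f, α_i⟩ > 0 for all i}`. -/
def domCham (B : Type) [Fintype B] [DecidableEq B] : Set (B → ℝ) :=
  {f | ∀ i : B, 0 < pair f (sroot i)}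

/-- The Tits cone `U = ⋃_{w ∈ W} w · (closure of C)`. -/
def titsCone [Fintype B] [DecidableEq B] (π : W →* (B → ℝ) ≃ₗ[ℝ] (B → ℝ)) :
    Set (B → ℝ) :=
  ⋃ w : W, (π w) '' closure (domCham B)

/-- `A ⩀ B := A ∩ B ∩ U°`, where `U°` is the interior of the Tits cone. -/
def dcap [Fintype B] [DecidableEq B] (π : W →* (B → ℝ) ≃ₗ[ℝ] (B → ℝ))
    (A A' : Set (B → ℝ)) : Set (B → ℝ) :=
  A ∩ A' ∩ interior (titsCone π)

/-- A set `𝔔` of hyperplanes is intersecting if `H₁ ⩀ H₂ ≠ ∅` for all `H₁, H₂ ∈ 𝔔`. -/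
def Intersecting [Fintype B] [DecidableEq B] (π : W →* (B → ℝ) ≃ₗ[ℝ] (B → ℝ))
    (Q : Set (Set (B → ℝ))) : Prop :=
  ∀ H₁ ∈ Q, ∀ H₂ ∈ Q, (dcap π H₁ H₂).Nonempty

/-- The chamber `wC ⊆ V*`. -/
def cham [Fintype B] [DecidableEq B] (π : W →* (B → ℝ) ≃ₗ[ℝ] (B → ℝ)) (w : W) :
    Set (B → ℝ) :=
  (π w) '' domCham B

/-- The hyperplane with root `α` separates `f, g ∈ V*`: `⟨f, α⟩⟨g, α⟩ < 0`. -/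
def SepPt [Fintype B] (α f g : B → ℝ) : Prop := pair f α * pair g α < 0

/-- The hyperplane with root `α` separates the subsets `A, A'` of `V*`: every point of
`A ∪ A'` lies off the hyperplane, and every point of `A` is separated from every point
of `A'`. -/
def SepSets [Fintype B] (α : B → ℝ) (A A' : Set (B → ℝ)) : Prop :=
  (∀ f ∈ A ∪ A', pair f α ≠ 0) ∧ ∀ f ∈ A, ∀ g ∈ A', SepPt α f g

/-- The subset `A ⊆ V*` lies entirely on one side of the hyperplane with root `α`. -/
def OneSide [Fintype B] (α : B → ℝ) (A : Set (B → ℝ)) : Prop :=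
  (∀ f ∈ A, pair f α ≠ 0) ∧ ∀ f ∈ A, ∀ g ∈ A, ¬ SepPt α f g

/-- The hyperplane `H ∈ 𝔓` separates the subsets `A, A'` of `V*` (expressed via a
positive root `α` with `H = H_α`; this does not depend on the choice of `α`). -/
def SepSetsH [Fintype B] [DecidableEq B] (ρ : W →* (B → ℝ) ≃ₗ[ℝ] (B → ℝ))
    (H : Set (B → ℝ)) (A A' : Set (B → ℝ)) : Prop :=
  ∃ α ∈ PhiPos (W := W) ρ, H = hyp α ∧ SepSets α A A'


/-- The open half-space bounded by the hyperplane with root `α` on the side not containing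
the chamber `wC`. -/
def halfNeg [Fintype B] [DecidableEq B] (π : W →* (B → ℝ) ≃ₗ[ℝ] (B → ℝ)) (w : W)
    (α : B → ℝ) : Set (B → ℝ) :=
  {f | ∀ f₀ ∈ cham π w, pair f α * pair f₀ α < 0}

/-- Auxiliary recursion producing the sets `𝔄_i` (first component) together with the
cumulative unions `𝔄₀ ∪ ⋯ ∪ 𝔄_i` (second component), starting from `𝔄₀ = A0`:
`𝔄_{i+1} = {P ∈ Q ∖ (𝔄₀ ∪ ⋯ ∪ 𝔄_i) : P ⩀ σ(R) = ∅ for some R ∈ 𝔄_i}`. -/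
def AseqAux [Fintype B] [DecidableEq B] (π : W →* (B → ℝ) ≃ₗ[ℝ] (B → ℝ))
    (Q : Set (Set (B → ℝ))) (σ : W) (A0 : Set (Set (B → ℝ))) :
    ℕ → Set (Set (B → ℝ)) × Set (Set (B → ℝ))
  | 0 => (A0, A0)
  | i + 1 =>
    let prev := AseqAux π Q σ A0 i
    ({P | P ∈ Q ∧ P ∉ prev.2 ∧ ∃ R ∈ prev.1, dcap π P ((π σ) '' R) = ∅},
      prev.2 ∪ {P | P ∈ Q ∧ P ∉ prev.2 ∧ ∃ R ∈ prev.1, dcap π P ((π σ) '' R) = ∅})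

/-- The set `𝔄_i`. -/
def Aseq [Fintype B] [DecidableEq B] (π : W →* (B → ℝ) ≃ₗ[ℝ] (B → ℝ))
    (Q : Set (Set (B → ℝ))) (σ : W) (A0 : Set (Set (B → ℝ))) (i : ℕ) :
    Set (Set (B → ℝ)) :=
  (AseqAux π Q σ A0 i).1

section Words

variable {M : CoxeterMatrix B}

/-- The element `x′_n = x s₁ ⋯ ŝ_{i₁} ⋯ ŝ_{i_{n−1}} ⋯ s_{i_n − 1}`: the product of `x` and
the first `i_n - 1` letters of the word `ω`, with the letters at positions `i₁, …, i_{n−1}`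
omitted. (Positions are recorded `0`-based: the index `ι n : Fin ω.length` corresponds to
the letter `s_{i_{n+1}}` of the paper.) -/
def omitProd (cs : CoxeterSystem M W) (x : W) (ω : List B) {p : ℕ}
    (ι : Fin p → Fin ω.length) (n : Fin p) : W :=
  x * cs.wordProd (((List.finRange ω.length).filter
      (fun j : Fin ω.length => decide ((j : ℕ) < (ι n : ℕ) ∧ ∀ m : Fin p, m < n → j ≠ ι m))).map ω.get)

/-- The condition `ℓ(x′_n s_{i_n}) < ℓ(x′_n)` for all `n = 1, …, p`. -/
def DescCond (cs : CoxeterSystem M W) (x : W) (ω : List B) {p : ℕ}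
    (ι : Fin p → Fin ω.length) : Prop :=
  ∀ n : Fin p, cs.length (omitProd cs x ω ι n * cs.simple (ω.get (ι n))) <
    cs.length (omitProd cs x ω ι n)

/-- The element `x_n := x s₁ ⋯ s_{i_n − 1}`. -/
def xseq (cs : CoxeterSystem M W) (x : W) (ω : List B) {p : ℕ}
    (ι : Fin p → Fin ω.length) (n : Fin p) : W :=
  x * cs.wordProd (ω.take (ι n))

/-- The reflection `σ_n := x_n s_{i_n} x_n⁻¹`. -/
def sigmaseq (cs : CoxeterSystem M W) (x : W) (ω : List B) {p : ℕ}
    (ι : Fin p → Fin ω.length) (n : Fin p) : W :=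
  xseq cs x ω ι n * cs.simple (ω.get (ι n)) * (xseq cs x ω ι n)⁻¹

/-- The element `e_n := σ_n σ_{n−1} ⋯ σ₁`, with `e₀ = e`. -/
def eseq (cs : CoxeterSystem M W) (x : W) (ω : List B) {p : ℕ}
    (ι : Fin p → Fin ω.length) : ℕ → W
  | 0 => 1
  | n + 1 => (if h : n < p then sigmaseq cs x ω ι ⟨n, h⟩ else 1) * eseq cs x ω ι n

/-- A root of the hyperplane `H_n` corresponding to the reflection `σ_n`, namely
`x_n · α_{s_{i_n}}`. -/
def rootseq [Fintype B] [DecidableEq B] (cs : CoxeterSystem M W)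
    (ρ : W →* (B → ℝ) ≃ₗ[ℝ] (B → ℝ)) (x : W) (ω : List B) {p : ℕ}
    (ι : Fin p → Fin ω.length) (n : Fin p) : B → ℝ :=
  ρ (xseq cs x ω ι n) (sroot (ω.get (ι n)))

/-- The hyperplane `H_n ∈ 𝔓` corresponding to the reflection `σ_n`. -/
def Hseq [Fintype B] [DecidableEq B] (cs : CoxeterSystem M W)
    (ρ : W →* (B → ℝ) ≃ₗ[ℝ] (B → ℝ)) (x : W) (ω : List B) {p : ℕ}
    (ι : Fin p → Fin ω.length) (n : Fin p) : Set (B → ℝ) :=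
  hyp (rootseq cs ρ x ω ι n)

end Words



-- ===================== auxiliary development =====================
set_option linter.unusedSectionVars false
set_option maxHeartbeats 1600000

section Base
variable [Fintype B] [DecidableEq B] {M : CoxeterMatrix B}

theorem cB_diag (i : B) : cB M i i = 1 := by
  simp [cB, M.diagonal i]

theorem cB_symm (i j : B) : cB M i j = cB M j i := by
  have h : M i j = M j i := M.symmetric i j
  simp [cB, h]

theorem pair_sroot (f : B → ℝ) (i : B) : pair f (sroot i) = f i := by
  unfold pair sroot
  rw [Finset.sum_eq_single i]
  · simp
  · intro b _ hb; simp [Pi.single_apply, hb]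
  · intro h; exact absurd (Finset.mem_univ i) h

theorem bform_sroot (u : B → ℝ) (i : B) :
    bform M (sroot i) u = ∑ j, u j * cB M i j := by
  unfold bform sroot
  rw [Finset.sum_eq_single i]
  · apply Finset.sum_congr rfl; intro j _; simp
  · intro b _ hb
    apply Finset.sum_eq_zero; intro j _; simp [Pi.single_apply, hb]
  · intro h; exact absurd (Finset.mem_univ i) h

theorem bform_sroot_sroot (i j : B) : bform M (sroot i) (sroot j) = cB M i j := by
  rw [bform_sroot]
  rw [Finset.sum_eq_single j]
  · simp [sroot]
  · intro b _ hb; simp [sroot, Pi.single_apply, hb]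
  · intro h; exact absurd (Finset.mem_univ j) h

theorem bform_sroot_add (i : B) (u v : B → ℝ) :
    bform M (sroot i) (u + v) = bform M (sroot i) u + bform M (sroot i) v := by
  simp only [bform_sroot, Pi.add_apply, add_mul]
  rw [Finset.sum_add_distrib]

theorem bform_sroot_smul (i : B) (c : ℝ) (u : B → ℝ) :
    bform M (sroot i) (c • u) = c * bform M (sroot i) u := by
  simp only [bform_sroot, Pi.smul_apply, smul_eq_mul, Finset.mul_sum]
  congr 1; ext j; ring

theorem bform_sroot_comb (i a b : B) (x y : ℝ) :
    bform M (sroot i) (x • sroot a + y • sroot b)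
      = x * cB M i a + y * cB M i b := by
  rw [bform_sroot_add, bform_sroot_smul, bform_sroot_smul, bform_sroot_sroot, bform_sroot_sroot]

end Base

/-- `γ = cos (π/m)`, with the convention `γ = 1` for `m = 0` (i.e. `m = ∞`). -/
def gam (m : ℕ) : ℝ := if m = 0 then 1 else Real.cos (Real.pi / m)

/-- `sin (k π/m) / sin (π/m)`, with the convention `k` for `m = 0`. -/
def chebF (m : ℕ) (k : ℕ) : ℝ :=
  if m = 0 then k else Real.sin (k * (Real.pi / m)) / Real.sin (Real.pi / m)

theorem sin_base_pos {m : ℕ} (hm0 : m ≠ 0) (hm1 : m ≠ 1) : 0 < Real.sin (Real.pi / m) := by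
  have hm2 : 2 ≤ m := by omega
  apply Real.sin_pos_of_pos_of_lt_pi
  · positivity
  · rw [div_lt_iff₀ (by positivity)]
    have h1 : (1:ℝ) ≤ m := by exact_mod_cast Nat.one_le_iff_ne_zero.mpr hm0
    have h2 : (2:ℝ) ≤ m := by exact_mod_cast hm2
    nlinarith [mul_le_mul_of_nonneg_left h2 Real.pi_pos.le, Real.pi_pos]

theorem chebF_zero (m : ℕ) : chebF m 0 = 0 := by simp [chebF]

theorem chebF_one {m : ℕ} (hm1 : m ≠ 1) : chebF m 1 = 1 := by
  unfold chebF
  rcases eq_or_ne m 0 with h | h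
  · simp [h]
  · rw [if_neg h]
    push_cast
    rw [one_mul, div_self (ne_of_gt (sin_base_pos h hm1))]

theorem chebF_rec {m : ℕ} (hm1 : m ≠ 1) (k : ℕ) :
    chebF m (k + 2) = 2 * gam m * chebF m (k + 1) - chebF m k := by
  unfold chebF gam
  rcases eq_or_ne m 0 with h | h
  · rw [if_pos h, if_pos h, if_pos h, if_pos h]; push_cast; ring
  · rw [if_neg h, if_neg h, if_neg h, if_neg h]
    have hs := ne_of_gt (sin_base_pos h hm1)
    set θ := Real.pi / m
    have h2 : ((k:ℝ) + 2) * θ = ((k:ℝ)+1) * θ + θ := by ring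
    have h0 : (k:ℝ) * θ = ((k:ℝ)+1) * θ - θ := by ring
    push_cast
    rw [h2, h0, Real.sin_add, Real.sin_sub]
    field_simp
    ring

theorem chebF_nonneg {m : ℕ} (hm1 : m ≠ 1) {k : ℕ} (hk : m = 0 ∨ k ≤ m) :
    0 ≤ chebF m k := by
  unfold chebF
  rcases eq_or_ne m 0 with h | h
  · rw [if_pos h]; positivity
  · rw [if_neg h]
    have hk' : k ≤ m := hk.resolve_left h
    apply div_nonneg _ (le_of_lt (sin_base_pos h hm1))
    apply Real.sin_nonneg_of_nonneg_of_le_pi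
    · positivity
    · calc (k:ℝ) * (Real.pi / m) ≤ m * (Real.pi / m) := by
            apply mul_le_mul_of_nonneg_right (by exact_mod_cast hk') (by positivity)
      _ = Real.pi := by field_simp

theorem gam_nonneg {m : ℕ} (hm1 : m ≠ 1) : 0 ≤ gam m := by
  unfold gam
  rcases eq_or_ne m 0 with h | h
  · rw [if_pos h]; norm_num
  · rw [if_neg h]
    have hm2 : 2 ≤ m := by omega
    apply Real.cos_nonneg_of_mem_Icc
    have hmR : (0:ℝ) < m := by exact_mod_cast Nat.pos_of_ne_zero h
    constructor
    · have hd := div_pos Real.pi_pos hmR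
      have hp2 : (0:ℝ) < Real.pi / 2 := by positivity
      linarith
    · rw [div_le_div_iff₀ hmR (by norm_num)]
      nlinarith [mul_le_mul_of_nonneg_left (by exact_mod_cast hm2 : (2:ℝ) ≤ m) Real.pi_pos.le]


theorem cB_eq_neg_gam {M : CoxeterMatrix B} (i j : B) : cB M i j = - gam (M i j) := by
  unfold cB gam
  rcases eq_or_ne (M i j) 0 with h | h <;> simp [h]

section Geom
variable [Fintype B] [DecidableEq B] {M : CoxeterMatrix B}
variable (cs : CoxeterSystem M W) (ρ : W →* (B → ℝ) ≃ₗ[ℝ] (B → ℝ)) (hρ : IsGeomRep M cs ρ)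

local prefix:100 "s" => cs.simple
local prefix:100 "π" => cs.wordProd
local prefix:100 "ℓ" => cs.length

theorem rho_mul_apply (a b : W) (v : B → ℝ) : ρ (a * b) v = ρ a (ρ b v) := by
  rw [map_mul]; rfl

include hρ in
theorem rho_simple_self (i : B) : ρ (s i) (sroot i) = - sroot i := by
  rw [hρ i, bform_sroot_sroot, cB_diag]
  module

include hρ in
theorem act_fst (i j : B) (x y : ℝ) :
    ρ (s i) (x • sroot i + y • sroot j)
      = (2 * gam (M i j) * y - x) • sroot i + y • sroot j := by
  rw [hρ i, bform_sroot_comb, cB_diag, cB_eq_neg_gam]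
  module

include hρ in
theorem act_snd (i j : B) (x y : ℝ) :
    ρ (s j) (x • sroot i + y • sroot j)
      = x • sroot i + (2 * gam (M i j) * x - y) • sroot j := by
  rw [hρ j, bform_sroot_comb, cB_diag, cB_symm j i, cB_eq_neg_gam]
  module

theorem length_wordProd_mod_two (ω : List B) : ℓ (π ω) % 2 = ω.length % 2 := by
  induction ω with
  | nil => simp
  | cons a t ih =>
    rw [cs.wordProd_cons]
    rcases cs.length_simple_mul (π t) a with h | h <;>
      · rw [List.length_cons]; omega

/-- The alternating word of length `r` *starting* (on the left) with `j`. -/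
def altW (i j : B) (r : ℕ) : List B :=
  if Even r then CoxeterSystem.alternatingWord j i r else CoxeterSystem.alternatingWord i j r

def altT (i j : B) (r : ℕ) : B := if Even r then j else i

theorem altW_zero (i j : B) : altW i j 0 = [] := by simp [altW, CoxeterSystem.alternatingWord]

theorem altW_succ (i j : B) (r : ℕ) :
    altW i j (r + 1) = (altW i j r).concat (altT i j r) := by
  unfold altW altT
  rcases Nat.even_or_odd r with h | h
  · rw [if_pos h, if_neg (by simp [Nat.even_add_one, h]), if_pos h]
    rfl
  · rw [if_neg (Nat.not_even_iff_odd.mpr h), if_pos (by simp [Nat.even_add_one, Nat.not_even_iff_odd.mpr h]),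
      if_neg (Nat.not_even_iff_odd.mpr h)]
    rfl

theorem altW_length (i j : B) (r : ℕ) : (altW i j r).length = r := by
  unfold altW
  rcases Nat.even_or_odd r with h | h
  · rw [if_pos h, CoxeterSystem.length_alternatingWord]
  · rw [if_neg (Nat.not_even_iff_odd.mpr h), CoxeterSystem.length_alternatingWord]

theorem cons_altW (i j : B) (q : ℕ) :
    i :: altW i j q
      = if Even q then CoxeterSystem.alternatingWord j i (q+1)
        else CoxeterSystem.alternatingWord i j (q+1) := by
  unfold altW
  rcases Nat.even_or_odd q with h | h
  · rw [if_pos h, if_pos h, CoxeterSystem.alternatingWord_succ', if_pos h]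
  · rw [if_neg (Nat.not_even_iff_odd.mpr h), if_neg (Nat.not_even_iff_odd.mpr h),
      CoxeterSystem.alternatingWord_succ', if_neg (Nat.not_even_iff_odd.mpr h)]

include hρ in
/-- Theorem A: if `i` is not a right descent of `w`, then `w · α_i` is nonnegative. -/
theorem posA : ∀ (L : ℕ) (w : W), ℓ w = L → ∀ i : B, ¬ cs.IsRightDescent w i →
    ∀ b : B, 0 ≤ ρ w (sroot i) b := by
  intro L
  induction L using Nat.strong_induction_on with
  | _ L IH =>
  intro w hw i hdesc b
  by_cases hw1 : w = 1
  · subst hw1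
    rw [map_one]
    show (0:ℝ) ≤ sroot i b
    unfold sroot
    rcases eq_or_ne b i with rfl | hb
    · simp
    · simp [Pi.single_apply, hb]
  -- main case
  obtain ⟨j, hj⟩ := cs.exists_rightDescent_of_ne_one hw1
  have hij : j ≠ i := fun h => hdesc (h ▸ hj)
  have hm1 : M i j ≠ 1 := M.off_diagonal i j (fun h => hij h.symm)
  have hL1 : 1 ≤ L := by
    rcases Nat.eq_zero_or_pos L with h | h
    · exact absurd (cs.length_eq_zero_iff.mp (hw.trans h)) hw1
    · exact h
  classical
  set C : ℕ → Prop := fun r => ℓ (w * π (altW i j r)) + r ≤ L with hC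
  have hC1 : C 1 := by
    have h1 : altW i j 1 = [j] := by
      rw [altW_succ, altW_zero]
      rfl
    show ℓ (w * π (altW i j 1)) + 1 ≤ L
    rw [h1, cs.wordProd_singleton]
    have := hj
    unfold CoxeterSystem.IsRightDescent at this
    omega
  set q := Nat.findGreatest C L with hqdef
  have hCq : C q := Nat.findGreatest_spec hL1 hC1
  have hq1 : 1 ≤ q := Nat.le_findGreatest hL1 hC1
  have hnotq : ¬ C (q + 1) := by
    rcases le_or_gt (q + 1) L with h | h
    · exact Nat.findGreatest_is_greatest (Nat.lt_succ_self q) h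
    · intro hc
      unfold C at hc
      omega
  set v := w * π (altW i j q) with hv
  have hwv : w = v * (π (altW i j q))⁻¹ := by rw [hv]; group
  have hLle : L ≤ ℓ v + q := by
    calc L = ℓ w := hw.symm
    _ ≤ ℓ v + ℓ ((π (altW i j q))⁻¹) := by rw [hwv]; exact cs.length_mul_le _ _
    _ ≤ ℓ v + q := by
        rw [cs.length_inv]
        have := cs.length_wordProd_le (altW i j q)
        rw [altW_length] at this
        omega
  have hlv : ℓ v + q = L := le_antisymm hCq hLle
  -- non-descent at `altT i j q`
  have hNDq : ¬ cs.IsRightDescent v (altT i j q) := by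
    intro hd
    unfold CoxeterSystem.IsRightDescent at hd
    apply hnotq
    show ℓ (w * π (altW i j (q+1))) + (q+1) ≤ L
    rw [altW_succ, cs.wordProd_concat, ← mul_assoc, ← hv]
    omega
  -- non-descent at `altT i j (q-1)`
  clear_value q
  obtain ⟨q', rfl⟩ : ∃ q', q = q' + 1 := ⟨q - 1, by omega⟩
  have hNDq' : ¬ cs.IsRightDescent v (altT i j q') := by
    intro hd
    unfold CoxeterSystem.IsRightDescent at hd
    have hv' : v * s (altT i j q') = w * π (altW i j q') := by
      rw [hv, altW_succ, cs.wordProd_concat, ← mul_assoc]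
      exact cs.simple_mul_simple_cancel_right _
    rw [hv'] at hd
    have : L ≤ ℓ (w * π (altW i j q')) + q' := by
      calc L = ℓ w := hw.symm
      _ ≤ ℓ (w * π (altW i j q')) + ℓ ((π (altW i j q'))⁻¹) := by
          nth_rewrite 1 [show w = (w * π (altW i j q')) * (π (altW i j q'))⁻¹ by group]
          exact cs.length_mul_le _ _
      _ ≤ ℓ (w * π (altW i j q')) + q' := by
          rw [cs.length_inv]
          have := cs.length_wordProd_le (altW i j q')
          rw [altW_length] at this
          omega
    omega
  -- the two non-descents are at i and j
  have hNDi : ¬ cs.IsRightDescent v i := by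
    rcases Nat.even_or_odd q' with h | h
    · have : altT i j (q' + 1) = i := by
        simp [altT, Nat.even_add_one, h]
      rwa [this] at hNDq
    · have : altT i j q' = i := by
        simp [altT, Nat.not_even_iff_odd.mpr h]
      rwa [this] at hNDq'
  have hNDj : ¬ cs.IsRightDescent v j := by
    rcases Nat.even_or_odd q' with h | h
    · have : altT i j q' = j := by simp [altT, h]
      rwa [this] at hNDq'
    · have : altT i j (q' + 1) = j := by
        simp [altT, Nat.even_add_one, Nat.not_even_iff_odd.mpr h]
      rwa [this] at hNDq
  -- q ≤ m - 1 (when m ≠ 0)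
  have hqm : M i j ≠ 0 → q' + 1 < M i j := by
    intro hm0
    by_contra hge
    push_neg at hge
    -- i :: altW i j q is an alternating word of length q+2 > m, hence not reduced
    have hlen : ℓ (π (i :: altW i j (q' + 1))) ≤ q' := by
      have hnr : ¬ cs.IsReduced (i :: altW i j (q' + 1)) := by
        rw [cons_altW]
        rcases Nat.even_or_odd (q' + 1) with h | h
        · rw [if_pos h]
          apply cs.not_isReduced_alternatingWord j i
          · rw [← M.symmetric i j]; exact hm0
          · rw [← M.symmetric i j]; omega
        · rw [if_neg (Nat.not_even_iff_odd.mpr h)]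
          apply cs.not_isReduced_alternatingWord i j
          · exact hm0
          · omega
      have hle := cs.length_wordProd_le (i :: altW i j (q' + 1))
      have hpar := length_wordProd_mod_two cs (i :: altW i j (q' + 1))
      rw [List.length_cons, altW_length] at hle hpar
      unfold CoxeterSystem.IsReduced at hnr
      rw [List.length_cons, altW_length] at hnr
      omega
    have : ℓ (w * s i) < ℓ w := by
      have hws : w * s i = v * (π (i :: altW i j (q' + 1)))⁻¹ := by
        rw [cs.wordProd_cons, mul_inv_rev, cs.inv_simple, ← mul_assoc, ← hwv]
      calc ℓ (w * s i) ≤ ℓ v + ℓ ((π (i :: altW i j (q' + 1)))⁻¹) := by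
            rw [hws]; exact cs.length_mul_le _ _
      _ ≤ ℓ v + q' := by rw [cs.length_inv]; omega
      _ < L := by omega
      _ = ℓ w := hw.symm
    exact hdesc this
  -- the vector computation
  have hvec : ∀ r : ℕ, ρ ((π (altW i j r))⁻¹) (sroot i)
      = chebF (M i j) (if Even r then r+1 else r) • sroot i
        + chebF (M i j) (if Even r then r else r+1) • sroot j := by
    intro r
    induction r with
    | zero =>
      simp only [altW_zero, cs.wordProd_nil, inv_one, map_one]
      rw [if_pos (by norm_num), if_pos (by norm_num), chebF_zero, chebF_one hm1]
      show sroot i = _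
      module
    | succ r ih =>
      have hstep : (π (altW i j (r+1)))⁻¹ = s (altT i j r) * (π (altW i j r))⁻¹ := by
        rw [altW_succ, cs.wordProd_concat, mul_inv_rev, cs.inv_simple]
      have hrec : 2 * gam (M i j) * chebF (M i j) (r + 1) - chebF (M i j) r
          = chebF (M i j) (r + 2) := (chebF_rec hm1 r).symm
      rw [hstep, rho_mul_apply, ih]
      rcases Nat.even_or_odd r with h | h
      · -- altT = j; apply act_snd
        have ht : altT i j r = j := by simp [altT, h]
        rw [ht, if_pos h, if_pos h, act_snd cs ρ hρ i j,
          if_neg (by simp [Nat.even_add_one, h]), if_neg (by simp [Nat.even_add_one, h]), hrec]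
      · -- altT = i; apply act_fst
        have h' : ¬ Even r := Nat.not_even_iff_odd.mpr h
        have ht : altT i j r = i := by simp [altT, h']
        rw [ht, if_neg h', if_neg h', act_fst cs ρ hρ i j,
          if_pos (by simp [Nat.even_add_one, h']), if_pos (by simp [Nat.even_add_one, h']), hrec]
  -- final assembly
  have hrw : ρ w (sroot i)
      = chebF (M i j) (if Even (q'+1) then q'+2 else q'+1) • (ρ v (sroot i))
        + chebF (M i j) (if Even (q'+1) then q'+1 else q'+2) • (ρ v (sroot j)) := by
    rw [hwv, rho_mul_apply, hvec (q'+1), map_add, map_smul, map_smul]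
  have hlvlt : ℓ v < L := by omega
  have hpi := IH (ℓ v) hlvlt v rfl i hNDi b
  have hpj := IH (ℓ v) hlvlt v rfl j hNDj b
  have hk1 : (M i j) = 0 ∨ (if Even (q'+1) then q'+2 else q'+1) ≤ M i j := by
    rcases eq_or_ne (M i j) 0 with h | h
    · exact Or.inl h
    · right; have := hqm h; split <;> omega
  have hk2 : (M i j) = 0 ∨ (if Even (q'+1) then q'+1 else q'+2) ≤ M i j := by
    rcases eq_or_ne (M i j) 0 with h | h
    · exact Or.inl h
    · right; have := hqm h; split <;> omega
  rw [hrw]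
  have c1 := chebF_nonneg hm1 hk1
  have c2 := chebF_nonneg hm1 hk2
  simp only [Pi.add_apply, Pi.smul_apply, smul_eq_mul]
  exact add_nonneg (mul_nonneg c1 hpi) (mul_nonneg c2 hpj)

end Geom


section WordLemmas

variable {M : CoxeterMatrix B}
variable (cs : CoxeterSystem M W)

local prefix:100 "s" => cs.simple
local prefix:100 "π" => cs.wordProd
local prefix:100 "ℓ" => cs.length

theorem conj_cancel (a b c : W) (h : b * b = 1) : a * b * a⁻¹ * (a * b * c) = a * c := by
  calc a * b * a⁻¹ * (a * b * c) = a * (b * b) * c := by group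
  _ = a * c := by rw [h]; group

theorem sigmaseq_mul_self (x : W) (ω : List B) {p : ℕ} (ι : Fin p → Fin ω.length) (n : Fin p) :
    sigmaseq cs x ω ι n * sigmaseq cs x ω ι n = 1 := by
  unfold sigmaseq
  have hss := cs.simple_mul_simple_self (ω.get (ι n))
  calc xseq cs x ω ι n * s (ω.get (ι n)) * (xseq cs x ω ι n)⁻¹
      * (xseq cs x ω ι n * s (ω.get (ι n)) * (xseq cs x ω ι n)⁻¹)
      = xseq cs x ω ι n * (s (ω.get (ι n)) * s (ω.get (ι n))) * (xseq cs x ω ι n)⁻¹ := by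
        group
  _ = 1 := by rw [hss]; group

/-- The product of simple reflections over `(range t).map` of position-wise letters. -/
theorem map_range_getD (ω : List B) (d : B) :
    ∀ t, t ≤ ω.length → (List.range t).map (fun k => ω.getD k d) = ω.take t := by
  intro t
  induction t with
  | zero => simp
  | succ t ih =>
    intro ht
    rw [List.range_succ, List.map_append, ih (by omega), List.take_succ]
    simp only [List.map_cons, List.map_nil]
    congr 1
    rw [List.getElem?_eq_getElem (by omega), List.getD_eq_getElem _ _ (by omega)]
    rfl

theorem filter_range_lt (N T : ℕ) (h : T ≤ N) :
    (List.range N).filter (fun j => decide (j < T)) = List.range T := by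
  induction N with
  | zero => have : T = 0 := by omega
            subst this; simp
  | succ N ih =>
    rcases Nat.lt_or_ge T (N+1) with h' | h'
    · rw [List.range_succ, List.filter_append, ih (by omega)]
      simp only [List.filter_cons, List.filter_nil]
      rw [if_neg (by simp; omega)]
      simp
    · have : T = N + 1 := by omega
      subst this
      rw [List.filter_eq_self.mpr]
      intro a ha
      simp only [List.mem_range] at ha
      simpa using ha

section Main

variable (x : W) (ω : List B) {p : ℕ} (ι : Fin p → Fin ω.length) (hι : StrictMono ι)
  (nn : ℕ) (hnn : nn < p)

/-- The word `Lw r`: positions `< ι nn` of `ω`, omitting positions `ι r, …, ι (nn-1)`. -/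
private def Lw (d : B) (r : ℕ) : List B :=
  ((List.range ω.length).filter (fun j => decide (j < (ι ⟨nn, hnn⟩ : ℕ) ∧
      ∀ m : Fin p, r ≤ (m : ℕ) → (m : ℕ) < nn → j ≠ (ι m : ℕ)))).map (fun k => ω.getD k d)

private def sigProd : ℕ → W
  | 0 => 1
  | k + 1 => (if h : nn - (k+1) < p then sigmaseq cs x ω ι ⟨nn - (k+1), h⟩ else 1)
      * sigProd k

theorem Lw_nn (d : B) : Lw ω ι nn hnn d nn = ω.take (ι ⟨nn, hnn⟩ : ℕ) := by
  unfold Lw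
  have h1 : (List.range ω.length).filter (fun j => decide (j < (ι ⟨nn, hnn⟩ : ℕ) ∧
        ∀ m : Fin p, nn ≤ (m : ℕ) → (m : ℕ) < nn → j ≠ (ι m : ℕ)))
      = (List.range ω.length).filter (fun j => decide (j < (ι ⟨nn, hnn⟩ : ℕ))) := by
    apply List.filter_congr
    intro a _
    apply decide_eq_decide.mpr
    constructor
    · exact fun h => h.1
    · exact fun h => ⟨h, fun m h1 h2 => by omega⟩
  rw [h1, filter_range_lt _ _ (le_of_lt (ι ⟨nn, hnn⟩).isLt), map_range_getD _ _ _ (le_of_lt (ι ⟨nn, hnn⟩).isLt)]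

include hι in
theorem tau_step (d : B) (rf : Fin p) (hr : (rf : ℕ) < nn) :
    π (ω.take (ι rf : ℕ)) * s (ω.get (ι rf))
      * (π (ω.take (ι rf : ℕ)))⁻¹ * π (Lw ω ι nn hnn d ((rf : ℕ)+1))
    = π (Lw ω ι nn hnn d (rf : ℕ)) := by
  have hJT : (ι rf : ℕ) < (ι ⟨nn, hnn⟩ : ℕ) := by
    have := hι (show rf < ⟨nn, hnn⟩ from by rw [Fin.lt_def]; exact hr)
    rwa [Fin.lt_def] at this
  have hJN : (ι rf : ℕ) < ω.length := (ι rf).isLt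
  have hmono : ∀ m : Fin p, (rf : ℕ) ≤ (m : ℕ) → (m : ℕ) < nn → (ι rf : ℕ) ≤ (ι m : ℕ) := by
    intro m h1 h2
    rcases eq_or_lt_of_le h1 with h | h
    · have hm : m = rf := Fin.ext h.symm
      rw [hm]
    · have := hι (show rf < m from by rw [Fin.lt_def]; exact h)
      rw [Fin.lt_def] at this
      exact le_of_lt this
  have hmono' : ∀ m : Fin p, (rf : ℕ) < (m : ℕ) → (ι rf : ℕ) < (ι m : ℕ) := by
    intro m h1
    have := hι (show rf < m from by rw [Fin.lt_def]; exact h1)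
    rwa [Fin.lt_def] at this
  have hsplit : List.range ω.length
      = List.range ((ι rf : ℕ)+1)
        ++ (List.range (ω.length - ((ι rf : ℕ)+1))).map (((ι rf : ℕ)+1) + ·) := by
    rw [← List.range_add]
    congr 1
    omega
  have hA1 : (List.range ((ι rf : ℕ)+1)).filter (fun j => decide (j < (ι ⟨nn, hnn⟩ : ℕ) ∧
        ∀ m : Fin p, (rf : ℕ)+1 ≤ (m : ℕ) → (m : ℕ) < nn → j ≠ (ι m : ℕ)))
      = List.range ((ι rf : ℕ)+1) := by
    apply List.filter_eq_self.mpr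
    intro a ha
    rw [List.mem_range] at ha
    apply decide_eq_true
    refine ⟨by omega, fun m h1 h2 => ?_⟩
    have := hmono' m (by omega)
    omega
  have hA2 : (List.range ((ι rf : ℕ)+1)).filter (fun j => decide (j < (ι ⟨nn, hnn⟩ : ℕ) ∧
        ∀ m : Fin p, (rf : ℕ) ≤ (m : ℕ) → (m : ℕ) < nn → j ≠ (ι m : ℕ)))
      = List.range (ι rf : ℕ) := by
    rw [List.range_succ, List.filter_append]
    have e1 : (List.range (ι rf : ℕ)).filter (fun j => decide (j < (ι ⟨nn, hnn⟩ : ℕ) ∧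
        ∀ m : Fin p, (rf : ℕ) ≤ (m : ℕ) → (m : ℕ) < nn → j ≠ (ι m : ℕ)))
        = List.range (ι rf : ℕ) := by
      apply List.filter_eq_self.mpr
      intro a ha
      rw [List.mem_range] at ha
      apply decide_eq_true
      refine ⟨by omega, fun m h1 h2 => ?_⟩
      have := hmono m h1 h2
      omega
    have e2 : [(ι rf : ℕ)].filter (fun j => decide (j < (ι ⟨nn, hnn⟩ : ℕ) ∧
        ∀ m : Fin p, (rf : ℕ) ≤ (m : ℕ) → (m : ℕ) < nn → j ≠ (ι m : ℕ))) = [] := by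
      simp only [List.filter_cons, List.filter_nil]
      rw [if_neg]
      simp only [decide_eq_true_eq]
      intro hc
      exact (hc.2 rf (le_refl _) hr) rfl
    rw [e1, e2, List.append_nil]
  have hB : ((List.range (ω.length - ((ι rf : ℕ)+1))).map (((ι rf : ℕ)+1) + ·)).filter
        (fun j => decide (j < (ι ⟨nn, hnn⟩ : ℕ) ∧
          ∀ m : Fin p, (rf : ℕ)+1 ≤ (m : ℕ) → (m : ℕ) < nn → j ≠ (ι m : ℕ)))
      = ((List.range (ω.length - ((ι rf : ℕ)+1))).map (((ι rf : ℕ)+1) + ·)).filter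
        (fun j => decide (j < (ι ⟨nn, hnn⟩ : ℕ) ∧
          ∀ m : Fin p, (rf : ℕ) ≤ (m : ℕ) → (m : ℕ) < nn → j ≠ (ι m : ℕ))) := by
    apply List.filter_congr
    intro a ha
    rw [List.mem_map] at ha
    obtain ⟨k, _, rfl⟩ := ha
    apply decide_eq_decide.mpr
    constructor
    · rintro ⟨h1, h2⟩
      refine ⟨h1, fun m hm1 hm2 => ?_⟩
      rcases eq_or_lt_of_le hm1 with h | h
      · have hm : m = rf := Fin.ext h.symm
        rw [hm]
        omega
      · exact h2 m h hm2
    · rintro ⟨h1, h2⟩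
      exact ⟨h1, fun m hm1 hm2 => h2 m (by omega) hm2⟩
  have htake : ω.take ((ι rf : ℕ)+1) = ω.take (ι rf : ℕ) ++ [ω.get (ι rf)] := by
    rw [List.take_succ]
    congr 1
    rw [List.getElem?_eq_getElem hJN]
    rfl
  have hLw1 : Lw ω ι nn hnn d ((rf : ℕ)+1) = (ω.take (ι rf : ℕ) ++ [ω.get (ι rf)])
      ++ (((List.range (ω.length - ((ι rf : ℕ)+1))).map (((ι rf : ℕ)+1) + ·)).filter
        (fun j => decide (j < (ι ⟨nn, hnn⟩ : ℕ) ∧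
          ∀ m : Fin p, (rf : ℕ) ≤ (m : ℕ) → (m : ℕ) < nn → j ≠ (ι m : ℕ)))).map
          (fun k => ω.getD k d) := by
    unfold Lw
    rw [hsplit, List.filter_append, List.map_append, hA1, hB,
      map_range_getD _ _ _ (by omega), htake]
  have hLw0 : Lw ω ι nn hnn d (rf : ℕ) = ω.take (ι rf : ℕ)
      ++ (((List.range (ω.length - ((ι rf : ℕ)+1))).map (((ι rf : ℕ)+1) + ·)).filter
        (fun j => decide (j < (ι ⟨nn, hnn⟩ : ℕ) ∧
          ∀ m : Fin p, (rf : ℕ) ≤ (m : ℕ) → (m : ℕ) < nn → j ≠ (ι m : ℕ)))).map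
          (fun k => ω.getD k d) := by
    unfold Lw
    rw [hsplit, List.filter_append, List.map_append, hA2,
      map_range_getD _ _ _ (by omega)]
  rw [hLw1, hLw0]
  rw [cs.wordProd_append, cs.wordProd_append, cs.wordProd_append, cs.wordProd_singleton]
  exact conj_cancel _ _ _ (cs.simple_mul_simple_self (ω.get (ι rf)))


theorem sigmaseq_conj (rf : Fin p) :
    sigmaseq cs x ω ι rf
      = x * (π (ω.take (ι rf : ℕ)) * s (ω.get (ι rf)) * (π (ω.take (ι rf : ℕ)))⁻¹) * x⁻¹ := by
  unfold sigmaseq xseq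
  group

include hι in
theorem sigProd_claimA (d : B) : ∀ k, k ≤ nn →
    sigProd cs x ω ι nn k * (x * π (ω.take (ι ⟨nn, hnn⟩ : ℕ)))
      = x * π (Lw ω ι nn hnn d (nn - k)) := by
  intro k
  induction k with
  | zero =>
    intro _
    rw [show sigProd cs x ω ι nn 0 = 1 from rfl, one_mul, Nat.sub_zero,
      Lw_nn ω ι nn hnn d]
  | succ k ih =>
    intro hk
    have hlt : nn - (k+1) < p := by omega
    have hr : nn - (k+1) < nn := by omega
    rw [show sigProd cs x ω ι nn (k+1)
        = (if h : nn - (k+1) < p then sigmaseq cs x ω ι ⟨nn - (k+1), h⟩ else 1)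
          * sigProd cs x ω ι nn k from rfl,
      dif_pos hlt, mul_assoc, ih (by omega), sigmaseq_conj cs x ω ι ⟨nn - (k+1), hlt⟩]
    have ht : π (ω.take (ι ⟨nn-(k+1), hlt⟩ : ℕ)) * s (ω.get (ι ⟨nn-(k+1), hlt⟩))
        * (π (ω.take (ι ⟨nn-(k+1), hlt⟩ : ℕ)))⁻¹ * π (Lw ω ι nn hnn d (nn - (k+1) + 1))
        = π (Lw ω ι nn hnn d (nn - (k+1))) :=
      tau_step cs ω ι hι nn hnn d ⟨nn - (k+1), hlt⟩ hr
    rw [show nn - k = nn - (k+1) + 1 from by omega]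
    calc x * (π (ω.take (ι ⟨nn-(k+1), hlt⟩ : ℕ)) * s (ω.get (ι ⟨nn-(k+1), hlt⟩))
          * (π (ω.take (ι ⟨nn-(k+1), hlt⟩ : ℕ)))⁻¹) * x⁻¹
          * (x * π (Lw ω ι nn hnn d (nn - (k+1) + 1)))
        = x * (π (ω.take (ι ⟨nn-(k+1), hlt⟩ : ℕ)) * s (ω.get (ι ⟨nn-(k+1), hlt⟩))
          * (π (ω.take (ι ⟨nn-(k+1), hlt⟩ : ℕ)))⁻¹ * π (Lw ω ι nn hnn d (nn - (k+1) + 1))) := by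
          group
    _ = x * π (Lw ω ι nn hnn d (nn - (k+1))) := by rw [ht]

include hnn in
theorem eseq_eq_sigProd : ∀ k, k ≤ nn →
    eseq cs x ω ι nn = (sigProd cs x ω ι nn k)⁻¹ * eseq cs x ω ι (nn - k) := by
  intro k
  induction k with
  | zero => intro _; rw [show sigProd cs x ω ι nn 0 = 1 from rfl, inv_one, one_mul, Nat.sub_zero]
  | succ k ih =>
    intro hk
    have hlt : nn - (k+1) < p := by omega
    rw [ih (by omega), show nn - k = (nn - (k+1)) + 1 from by omega,
      show eseq cs x ω ι ((nn-(k+1))+1)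
        = (if h : nn-(k+1) < p then sigmaseq cs x ω ι ⟨nn-(k+1), h⟩ else 1)
          * eseq cs x ω ι (nn-(k+1)) from rfl,
      dif_pos hlt,
      show sigProd cs x ω ι nn (k+1)
        = (if h : nn - (k+1) < p then sigmaseq cs x ω ι ⟨nn-(k+1), h⟩ else 1)
          * sigProd cs x ω ι nn k from rfl,
      dif_pos hlt, mul_inv_rev,
      inv_eq_of_mul_eq_one_right (sigmaseq_mul_self cs x ω ι ⟨nn-(k+1), hlt⟩)]
    group

theorem omitProd_eq_Lw (d : B) :
    omitProd cs x ω ι ⟨nn, hnn⟩ = x * π (Lw ω ι nn hnn d 0) := by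
  unfold omitProd Lw
  congr 2
  rw [← (show (List.finRange ω.length).map Fin.val = List.range ω.length from List.ext_getElem (by simp) (by simp)), List.filter_map, List.map_map]
  have hfil : (List.finRange ω.length).filter (fun j : Fin ω.length =>
        decide ((j : ℕ) < (ι ⟨nn, hnn⟩ : ℕ) ∧ ∀ m : Fin p, m < ⟨nn, hnn⟩ → j ≠ ι m))
      = (List.finRange ω.length).filter ((fun j => decide (j < (ι ⟨nn, hnn⟩ : ℕ) ∧
          ∀ m : Fin p, 0 ≤ (m : ℕ) → (m : ℕ) < nn → j ≠ (ι m : ℕ))) ∘ Fin.val) := by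
    apply List.filter_congr
    intro a _
    simp only [Function.comp_apply]
    apply decide_eq_decide.mpr
    constructor
    · rintro ⟨h1, h2⟩
      refine ⟨h1, fun m _ hm2 => fun hEq => ?_⟩
      exact (h2 m (by rw [Fin.lt_def]; exact hm2)) (Fin.ext hEq)
    · rintro ⟨h1, h2⟩
      refine ⟨h1, fun m hm => fun hEq => ?_⟩
      exact (h2 m (Nat.zero_le _) (by rw [Fin.lt_def] at hm; exact hm)) (congrArg Fin.val hEq)
  rw [hfil]
  apply List.map_congr_left
  intro a ha
  simp only [Function.comp_apply]
  rw [List.getD_eq_getElem _ _ a.isLt]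
  rfl

include hι in
theorem eseq_inv_mul_xseq :
    (eseq cs x ω ι nn)⁻¹ * xseq cs x ω ι ⟨nn, hnn⟩ = omitProd cs x ω ι ⟨nn, hnn⟩ := by
  obtain ⟨d⟩ : Nonempty B := ⟨ω.get (ι ⟨nn, hnn⟩)⟩
  have hB := eseq_eq_sigProd cs x ω ι nn hnn nn (le_refl nn)
  rw [Nat.sub_self] at hB
  rw [hB, show eseq cs x ω ι 0 = 1 from rfl, mul_one, inv_inv,
    show xseq cs x ω ι ⟨nn, hnn⟩ = x * π (ω.take (ι ⟨nn, hnn⟩ : ℕ)) from rfl,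
    sigProd_claimA cs x ω ι hι nn hnn d nn (le_refl nn), Nat.sub_self]
  exact (omitProd_eq_Lw cs x ω ι nn hnn d).symm

end Main


end WordLemmas


section Assembly

variable [Fintype B] [DecidableEq B] {M : CoxeterMatrix B}
variable (cs : CoxeterSystem M W) (ρ : W →* (B → ℝ) ≃ₗ[ℝ] (B → ℝ)) (hρ : IsGeomRep M cs ρ)

include hρ in
theorem negA (w : W) (i : B) (hd : cs.IsRightDescent w i) (b : B) :
    ρ w (sroot i) b ≤ 0 := by
  have h2 : ¬ cs.IsRightDescent (w * cs.simple i) i := by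
    unfold CoxeterSystem.IsRightDescent at hd ⊢
    rw [cs.simple_mul_simple_cancel_right]
    omega
  have hp := posA cs ρ hρ (cs.length (w * cs.simple i)) (w * cs.simple i) rfl i h2 b
  have heq : ρ w (sroot i) = - (ρ (w * cs.simple i) (sroot i)) := by
    nth_rewrite 1 [show w = (w * cs.simple i) * cs.simple i
      from (cs.simple_mul_simple_cancel_right i).symm]
    rw [rho_mul_apply, rho_simple_self cs ρ hρ, map_neg]
  rw [heq]
  simp only [Pi.neg_apply]
  linarith

theorem pair_pos_of_nonneg (g v : B → ℝ) (hg : g ∈ domCham B) (hv : ∀ b, 0 ≤ v b)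
    (hv0 : v ≠ 0) : 0 < pair g v := by
  have hgpos : ∀ i, 0 < g i := fun i => by have := hg i; rwa [pair_sroot] at this
  obtain ⟨b, hb⟩ := Function.ne_iff.mp hv0
  apply Finset.sum_pos'
  · intro i _
    exact mul_nonneg (hgpos i).le (hv i)
  · refine ⟨b, Finset.mem_univ b, mul_pos (hgpos b) (lt_of_le_of_ne (hv b) ?_)⟩
    simpa using (Ne.symm hb)

theorem pair_neg_of_nonpos (g v : B → ℝ) (hg : g ∈ domCham B) (hv : ∀ b, v b ≤ 0)
    (hv0 : v ≠ 0) : pair g v < 0 := by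
  have h := pair_pos_of_nonneg g (-v) hg (fun b => by simpa using hv b) (neg_ne_zero.mpr hv0)
  have h2 : pair g (-v) = - pair g v := by
    unfold pair
    rw [← Finset.sum_neg_distrib]
    apply Finset.sum_congr rfl
    intro i _
    simp
  rw [h2] at h
  linarith

end Assembly

/-- for `1 ≤ n ≤ p`, the hyperplane `H_n` separates the chambers `x₁C`
and `e_{n−1}C`. -/
theorem statement12 [Fintype B] [DecidableEq B] {M : CoxeterMatrix B}
    (cs : CoxeterSystem M W) (ρ π : W →* (B → ℝ) ≃ₗ[ℝ] (B → ℝ))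
    (hρ : IsGeomRep M cs ρ) (hπ : IsContraRep ρ π)
    (x y : W) (ω : List B) (hred : cs.IsReduced ω) (hy : cs.wordProd ω = y)
    (p : ℕ) (ι : Fin p → Fin ω.length) (hι : StrictMono ι)
    (hdesc : DescCond cs x ω ι)
    (n : ℕ) (hn1 : 1 ≤ n) (hnp : n ≤ p) :
    SepSets (rootseq cs ρ x ω ι ⟨n - 1, by omega⟩)
      (cham π (xseq cs x ω ι ⟨0, by omega⟩))
      (cham π (eseq cs x ω ι (n - 1))) := by
  have hnn : n - 1 < p := by omega
  have h0p : 0 < p := by omega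
  set ltr := ω.get (ι ⟨n - 1, hnn⟩) with hltr
  have hT0T : (ι ⟨0, h0p⟩ : ℕ) ≤ (ι ⟨n - 1, hnn⟩ : ℕ) := by
    have := hι.monotone (show (⟨0, h0p⟩ : Fin p) ≤ ⟨n - 1, hnn⟩
      from by rw [Fin.le_def]; exact Nat.zero_le _)
    rwa [Fin.le_def] at this
  have hTlen : (ι ⟨n - 1, hnn⟩ : ℕ) < ω.length := (ι ⟨n - 1, hnn⟩).isLt
  set slice : List B := (ω.take ((ι ⟨n - 1, hnn⟩ : ℕ))).drop (ι ⟨0, h0p⟩ : ℕ) with hslice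
  have htt : (ω.take ((ι ⟨n - 1, hnn⟩ : ℕ))).take (ι ⟨0, h0p⟩ : ℕ) = ω.take (ι ⟨0, h0p⟩ : ℕ) := by
    rw [List.take_take, min_eq_left hT0T]
  have hsplit : ω.take ((ι ⟨n - 1, hnn⟩ : ℕ)) = ω.take (ι ⟨0, h0p⟩ : ℕ) ++ slice := by
    nth_rewrite 1 [← List.take_append_drop ((ι ⟨0, h0p⟩ : ℕ)) (ω.take ((ι ⟨n - 1, hnn⟩ : ℕ)))]
    rw [htt, hslice]
  have hu : xseq cs x ω ι ⟨n - 1, hnn⟩ = xseq cs x ω ι ⟨0, h0p⟩ * cs.wordProd slice := by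
    unfold xseq
    rw [mul_assoc, ← cs.wordProd_append, ← hsplit]
  have hslice_red : cs.IsReduced slice := (hred.take _).drop _
  have hsl2 : slice ++ [ltr] = (ω.take ((ι ⟨n - 1, hnn⟩ : ℕ) + 1)).drop (ι ⟨0, h0p⟩ : ℕ) := by
    rw [List.take_succ, List.getElem?_eq_getElem hTlen, List.drop_append]
    have hz : (ι ⟨0, h0p⟩ : ℕ) - (ω.take ((ι ⟨n - 1, hnn⟩ : ℕ))).length = 0 := by
      rw [List.length_take]
      omega
    rw [hz, List.drop_zero]
    rfl
  have hred2 : cs.IsReduced (slice ++ [ltr]) := by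
    rw [hsl2]
    exact (hred.take _).drop _
  have hnd : ¬ cs.IsRightDescent (cs.wordProd slice) ltr := by
    intro hlt
    unfold CoxeterSystem.IsRightDescent at hlt
    rw [show cs.wordProd slice * cs.simple ltr = cs.wordProd (slice ++ [ltr])
      from by rw [cs.wordProd_append, cs.wordProd_singleton]] at hlt
    have e1 := hred2
    have e2 := hslice_red
    unfold CoxeterSystem.IsReduced at e1 e2
    rw [List.length_append, List.length_cons, List.length_nil] at e1
    omega
  have hdescn : cs.IsRightDescent (omitProd cs x ω ι ⟨n - 1, hnn⟩) ltr := hdesc ⟨n - 1, hnn⟩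
  -- the vectors
  have hposvec : ∀ b, 0 ≤ ρ (cs.wordProd slice) (sroot ltr) b :=
    posA cs ρ hρ (cs.length (cs.wordProd slice)) (cs.wordProd slice) rfl ltr hnd
  have hnegvec : ∀ b, ρ (omitProd cs x ω ι ⟨n - 1, hnn⟩) (sroot ltr) b ≤ 0 :=
    negA cs ρ hρ _ ltr hdescn
  have hsne : sroot ltr ≠ (0 : B → ℝ) := by
    intro h
    have := congrFun h ltr
    rw [show sroot ltr ltr = 1 from Pi.single_eq_same ltr 1] at this
    norm_num at this
  have hposne : ρ (cs.wordProd slice) (sroot ltr) ≠ 0 :=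
    fun h => hsne ((ρ (cs.wordProd slice)).map_eq_zero_iff.mp h)
  have hnegne : ρ (omitProd cs x ω ι ⟨n - 1, hnn⟩) (sroot ltr) ≠ 0 :=
    fun h => hsne ((ρ (omitProd cs x ω ι ⟨n - 1, hnn⟩)).map_eq_zero_iff.mp h)
  -- the root
  have hroot : rootseq cs ρ x ω ι ⟨n - 1, by omega⟩
      = ρ (xseq cs x ω ι ⟨n - 1, hnn⟩) (sroot ltr) := rfl
  -- relation to eseq
  have he : xseq cs x ω ι ⟨n - 1, hnn⟩
      = eseq cs x ω ι (n - 1) * omitProd cs x ω ι ⟨n - 1, hnn⟩ := by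
    rw [← eseq_inv_mul_xseq cs x ω ι hι (n - 1) hnn]
    group
  -- pair computations on the two chambers
  have key1 : ∀ f ∈ cham π (xseq cs x ω ι ⟨0, h0p⟩),
      0 < pair f (rootseq cs ρ x ω ι ⟨n - 1, by omega⟩) := by
    intro f hf
    obtain ⟨g, hg, rfl⟩ := hf
    rw [hroot, hu, rho_mul_apply, hπ (xseq cs x ω ι ⟨0, h0p⟩) g]
    exact pair_pos_of_nonneg g _ hg hposvec hposne
  have key2 : ∀ f ∈ cham π (eseq cs x ω ι (n - 1)),
      pair f (rootseq cs ρ x ω ι ⟨n - 1, by omega⟩) < 0 := by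
    intro f hf
    obtain ⟨g, hg, rfl⟩ := hf
    rw [hroot, he, rho_mul_apply, hπ (eseq cs x ω ι (n - 1)) g]
    exact pair_neg_of_nonpos g _ hg hnegvec hnegne
  constructor
  · intro f hf
    rcases hf with hf | hf
    · exact ne_of_gt (key1 f hf)
    · exact ne_of_lt (key2 f hf)
  · intro f hf g hg
    exact mul_neg_of_pos_of_neg (key1 f hf) (key2 g hg)

end PaperBound
end
end

section
/- Fix a chamber wC (w ∈ W) and for P ∈ 𝔓 write P^{−} := {f ∈ V* : ⟨f, α_P⟩⟨f₀, α_P⟩ < 0 for all f₀ ∈ wC} (the open half-space bounded by P not containing wC). Let H, Q ∈ 𝔓 with Q ≠ H and let σ_H be the reflection in H. Suppose there exist g₁, g₂ ∈ H^{−} ∩ (σ_H(Q))^{−} such that Q separates g₁ and g₂. Then Q ∩ H^{−} = Q ∩ (σ_H(Q))^{−}. -/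
noncomputable section

namespace PaperBound

variable {B : Type} {W : Type} [Group W]

private lemma pair_add_smul [Fintype B] (f u v : B → ℝ) (r : ℝ) :
    pair f (u + r • v) = pair f u + r * pair f v := by
  unfold pair
  rw [Finset.mul_sum, ← Finset.sum_add_distrib]
  exact Finset.sum_congr rfl fun i _ => by
    simp only [Pi.add_apply, Pi.smul_apply, smul_eq_mul]; ring

private lemma key_sign (c a d h1 h2 q1 q2 : ℝ)
    (ha1 : h1 * a < 0) (ha2 : h2 * a < 0)
    (hb1 : (q1 + c * h1) * d < 0) (hb2 : (q2 + c * h2) * d < 0)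
    (hq : q1 * q2 < 0) : 0 < c * a * d := by
  set b1 := q1 + c * h1 with e1
  set b2 := q2 + c * h2 with e2
  by_contra hc
  push_neg at hc
  have ha : a ≠ 0 := by rintro rfl; simp at ha1
  have hd : d ≠ 0 := by rintro rfl; simp at hb1
  have hasq : 0 < a ^ 2 := by positivity
  have hdsq : 0 < d ^ 2 := by positivity
  have p1 : 0 < (h1 * a) * (h2 * a) := mul_pos_of_neg_of_neg ha1 ha2
  have p2 : 0 < (b1 * d) * (b2 * d) := mul_pos_of_neg_of_neg hb1 hb2
  have hm : q1 * q2 * (a ^ 2 * d ^ 2) < 0 := mul_neg_of_neg_of_pos hq (mul_pos hasq hdsq)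
  have t1 : 0 < a ^ 2 * ((b1 * d) * (b2 * d)) := mul_pos hasq p2
  have t2 : 0 ≤ (-(c * a * d)) * ((h1 * a) * (b2 * d)) :=
    mul_nonneg (by linarith) (le_of_lt (mul_pos_of_neg_of_neg ha1 hb2))
  have t3 : 0 ≤ (-(c * a * d)) * ((h2 * a) * (b1 * d)) :=
    mul_nonneg (by linarith) (le_of_lt (mul_pos_of_neg_of_neg ha2 hb1))
  have t4 : 0 ≤ (c * d) ^ 2 * ((h1 * a) * (h2 * a)) := mul_nonneg (sq_nonneg _) p1.le
  rw [e1] at t1 t3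
  rw [e2] at t1 t2
  nlinarith [hm, t1, t2, t3, t4]

private lemma sign_fwd (x a c d : ℝ) (h1 : x * a < 0) (h2 : 0 < c * a * d) :
    c * x * d < 0 := by
  nlinarith [mul_pos (neg_pos.2 h1) h2, sq_nonneg a]

private lemma sign_bwd (x a c d : ℝ) (h1 : c * x * d < 0) (h2 : 0 < c * a * d) :
    x * a < 0 := by
  nlinarith [mul_pos (neg_pos.2 h1) h2, sq_nonneg c, sq_nonneg d, sq_nonneg (c * d)]

/-- fix a chamber `wC` and write `P⁻` for the open half-space bounded by
`P` not containing `wC`. Let `H = H_{α_H}, Q = H_{α_Q} ∈ 𝔓` with `Q ≠ H`, where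
`α_H = w′·α_i` and `σ_H = w′ s_i w′⁻¹`. If there are `g₁, g₂ ∈ H⁻ ∩ (σ_H(Q))⁻` with `Q`
separating `g₁` and `g₂`, then `Q ∩ H⁻ = Q ∩ (σ_H(Q))⁻`. -/
theorem statement18 [Fintype B] [DecidableEq B] {M : CoxeterMatrix B}
    (cs : CoxeterSystem M W) (ρ π : W →* (B → ℝ) ≃ₗ[ℝ] (B → ℝ))
    (hρ : IsGeomRep M cs ρ) (hπ : IsContraRep ρ π)
    (w : W)
    (αH αQ : B → ℝ) (hαH : αH ∈ PhiPos ρ) (hαQ : αQ ∈ PhiPos ρ)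
    (hne : hyp αQ ≠ hyp αH)
    (w' : W) (i : B) (hw' : αH = ρ w' (sroot i))
    (g₁ g₂ : B → ℝ)
    (hg₁ : g₁ ∈ halfNeg π w αH ∩ halfNeg π w (ρ (w' * cs.simple i * w'⁻¹) αQ))
    (hg₂ : g₂ ∈ halfNeg π w αH ∩ halfNeg π w (ρ (w' * cs.simple i * w'⁻¹) αQ))
    (hsep : SepPt αQ g₁ g₂) :
    hyp αQ ∩ halfNeg π w αH =
      hyp αQ ∩ halfNeg π w (ρ (w' * cs.simple i * w'⁻¹) αQ) := by
  obtain ⟨c, hβ⟩ : ∃ c : ℝ, ρ (w' * cs.simple i * w'⁻¹) αQ = αQ + c • αH := by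
    refine ⟨-(2 * bform M (sroot i) (ρ w'⁻¹ αQ)), ?_⟩
    have h1 : ρ (w' * cs.simple i * w'⁻¹) αQ
        = ρ w' (ρ (cs.simple i) (ρ w'⁻¹ αQ)) := by
      rw [map_mul, map_mul]; rfl
    have h2 : ρ w' (ρ w'⁻¹ αQ) = αQ := by
      have h : ρ (w' * w'⁻¹) αQ = ρ w' (ρ w'⁻¹ αQ) := by rw [map_mul]; rfl
      rw [← h]; simp
    rw [h1, hρ i (ρ w'⁻¹ αQ), map_sub, map_smul, h2, ← hw', neg_smul, ← sub_eq_add_neg]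
  have pf : ∀ f : B → ℝ, pair f (ρ (w' * cs.simple i * w'⁻¹) αQ)
      = pair f αQ + c * pair f αH := fun f => by rw [hβ, pair_add_smul]
  have hsep' : pair g₁ αQ * pair g₂ αQ < 0 := hsep
  ext f
  simp only [Set.mem_inter_iff]
  constructor
  · rintro ⟨hfQ, hfH⟩
    have hfQ' : pair f αQ = 0 := hfQ
    refine ⟨hfQ, ?_⟩
    intro f₀ hf₀
    have ha1 : pair g₁ αH * pair f₀ αH < 0 := hg₁.1 f₀ hf₀
    have ha2 : pair g₂ αH * pair f₀ αH < 0 := hg₂.1 f₀ hf₀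
    have hb1 := hg₁.2 f₀ hf₀
    have hb2 := hg₂.2 f₀ hf₀
    rw [pf g₁] at hb1
    rw [pf g₂] at hb2
    have hx : pair f αH * pair f₀ αH < 0 := hfH f₀ hf₀
    have hcad := key_sign c (pair f₀ αH) (pair f₀ (ρ (w' * cs.simple i * w'⁻¹) αQ))
      (pair g₁ αH) (pair g₂ αH) (pair g₁ αQ) (pair g₂ αQ) ha1 ha2 hb1 hb2 hsep'
    show pair f (ρ (w' * cs.simple i * w'⁻¹) αQ)
        * pair f₀ (ρ (w' * cs.simple i * w'⁻¹) αQ) < 0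
    rw [pf f, hfQ', zero_add]
    exact sign_fwd (pair f αH) (pair f₀ αH) c _ hx hcad
  · rintro ⟨hfQ, hfσ⟩
    have hfQ' : pair f αQ = 0 := hfQ
    refine ⟨hfQ, ?_⟩
    intro f₀ hf₀
    have ha1 : pair g₁ αH * pair f₀ αH < 0 := hg₁.1 f₀ hf₀
    have ha2 : pair g₂ αH * pair f₀ αH < 0 := hg₂.1 f₀ hf₀
    have hb1 := hg₁.2 f₀ hf₀
    have hb2 := hg₂.2 f₀ hf₀
    rw [pf g₁] at hb1
    rw [pf g₂] at hb2
    have hcad := key_sign c (pair f₀ αH) (pair f₀ (ρ (w' * cs.simple i * w'⁻¹) αQ))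
      (pair g₁ αH) (pair g₂ αH) (pair g₁ αQ) (pair g₂ αQ) ha1 ha2 hb1 hb2 hsep'
    have hx : pair f (ρ (w' * cs.simple i * w'⁻¹) αQ)
        * pair f₀ (ρ (w' * cs.simple i * w'⁻¹) αQ) < 0 := hfσ f₀ hf₀
    rw [pf f, hfQ', zero_add] at hx
    exact sign_bwd (pair f αH) (pair f₀ αH) c _ hx hcad

end PaperBound
end
end
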